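/- For a suitable pair (A,B), the second Sylvester sum satisfies S_2(A,B) = (S_0−1)·S_0·(2S_0−1)/6 + (S_0(A^2,B^2)/12)·(2S_0−1), where S_0 = S_0(A,B). Equivalently, S_2(A,B) = F·S_1(A,B) − 2·Σ_{n=0}^{S_0−1} n^2, where F is the Frobenius number of the semigroup generated by G(A,B). -/

import Mathlib

open Finset

/-- The compound sequence: `g k A B i = b₁⋯bᵢ · aᵢ₊₁⋯a_k` (0-indexed: `A j = a_{j+1}`,
`B j = b_{j+1}`). -/
def compoundSeq (k : ℕ) (A B : ℕ → ℕ) (i : ℕ) : ℕ :=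
  (∏ j ∈ Finset.range i, B j) * (∏ j ∈ Finset.Ico i k, A j)

/-- `n : ℤ` is representable as a nonnegative integer combination of `g₀,…,g_k`. -/
def RepZ (k : ℕ) (A B : ℕ → ℕ) (n : ℤ) : Prop :=
  ∃ c : Fin (k + 1) → ℕ, n = ∑ i : Fin (k + 1), (c i : ℤ) * (compoundSeq k A B (i : ℕ) : ℤ)

namespace CS

/-- Apery-type set of normal-form residue representatives. -/
def Ap (A B : ℕ → ℕ) : ℕ → Finset ℕ
  | 0 => {0}
  | k + 1 => ((Ap A B k) ×ˢ Finset.range (A k)).image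
      (fun p => A k * p.1 + p.2 * ∏ j ∈ Finset.range (k + 1), B j)

/-- `P = a₁⋯a_k`. -/
def P (k : ℕ) (A : ℕ → ℕ) : ℕ := ∏ j ∈ Finset.range k, A j

/-- `T = Σ (aᵢ−1) gᵢ`. -/
def T (k : ℕ) (A B : ℕ → ℕ) : ℕ := ∑ i ∈ Finset.range k, (A i - 1) * compoundSeq k A B (i + 1)

/-- Representable naturals. -/
def RepN (k : ℕ) (A B : ℕ → ℕ) (n : ℕ) : Prop :=
  ∃ e : ℕ → ℕ, n = ∑ i ∈ Finset.range (k + 1), e i * compoundSeq k A B i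

lemma cs_zero (k : ℕ) (A B : ℕ → ℕ) : compoundSeq k A B 0 = P k A := by
  unfold compoundSeq P
  rw [Finset.range_eq_Ico, Finset.Ico_self, Finset.prod_empty, one_mul, Finset.range_eq_Ico]

lemma cs_top (k : ℕ) (A B : ℕ → ℕ) : compoundSeq k A B k = ∏ j ∈ Finset.range k, B j := by
  simp [compoundSeq]

lemma cs_succ (k : ℕ) (A B : ℕ → ℕ) {i : ℕ} (h : i ≤ k) :
    compoundSeq (k + 1) A B i = A k * compoundSeq k A B i := by
  unfold compoundSeq
  rw [Finset.prod_Ico_succ_top h]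
  ring

lemma cs_rel (k : ℕ) (A B : ℕ → ℕ) :
    A k * compoundSeq (k + 1) A B (k + 1) = B k * compoundSeq (k + 1) A B k := by
  unfold compoundSeq
  rw [Finset.prod_range_succ, Finset.Ico_self, Finset.prod_empty]
  have : Finset.Ico k (k+1) = {k} := by
    rw [Finset.Ico_add_one_right_eq_Icc, Finset.Icc_self]
  rw [this]
  simp [mul_comm, mul_assoc, mul_left_comm]

lemma cs_pos (k : ℕ) (A B : ℕ → ℕ) (hA : ∀ i, i < k → 0 < A i) (hB : ∀ i, i < k → 0 < B i)
    {i : ℕ} (h : i ≤ k) : 0 < compoundSeq k A B i := by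
  apply Nat.mul_pos
  · exact Finset.prod_pos fun j hj => hB j (lt_of_lt_of_le (Finset.mem_range.mp hj) h)
  · exact Finset.prod_pos fun j hj => hA j (Finset.mem_Ico.mp hj).2

lemma P_pos (k : ℕ) (A B : ℕ → ℕ) (hA : ∀ i, i < k → 0 < A i) : 0 < P k A :=
  Finset.prod_pos fun j hj => hA j (Finset.mem_range.mp hj)

lemma P_succ (k : ℕ) (A : ℕ → ℕ) : P (k + 1) A = A k * P k A := by
  rw [P, P, Finset.prod_range_succ]; ring

lemma T_succ (k : ℕ) (A B : ℕ → ℕ) :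
    T (k + 1) A B = A k * T k A B + (A k - 1) * ∏ j ∈ Finset.range (k + 1), B j := by
  rw [T, T, Finset.sum_range_succ, Finset.mul_sum]
  congr 1
  · apply Finset.sum_congr rfl
    intro i hi
    rw [Finset.mem_range] at hi
    rw [cs_succ k A B (by omega : i + 1 ≤ k)]
    ring
  · rw [cs_top]

lemma inj_aux (a G : ℕ) (hcop : Nat.Coprime a G) {w w' v v' : ℕ} (ha : 0 < a)
    (hv : v < a) (hv' : v' < a) (h : a * w + v * G = a * w' + v' * G) : v = v' ∧ w = w' := by
  have hdvd : (a : ℤ) ∣ ((v' : ℤ) - v) * G := by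
    refine ⟨(w : ℤ) - w', ?_⟩
    have : (a : ℤ) * w + v * G = a * w' + v' * G := by exact_mod_cast h
    linarith
  have hcop' : IsCoprime (a : ℤ) (G : ℤ) := by
    rw [Nat.isCoprime_iff_coprime]; exact hcop
  have hdvd2 : (a : ℤ) ∣ ((v' : ℤ) - v) := hcop'.dvd_of_dvd_mul_right hdvd
  have hz : ((v' : ℤ) - v) = 0 := Int.eq_zero_of_abs_lt_dvd hdvd2 (by
    rw [abs_lt]; constructor <;> [push_cast; push_cast] <;> omega)
  have hvv : v = v' := by omega
  subst hvv
  have hw : a * w = a * w' := by omega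
  exact ⟨rfl, Nat.eq_of_mul_eq_mul_left ha hw⟩

lemma cop_prod (k : ℕ) (A B : ℕ → ℕ)
    (hsuit : ∀ i j, j ≤ i → i < k + 1 → Nat.Coprime (A i) (B j)) :
    Nat.Coprime (A k) (∏ j ∈ Finset.range (k + 1), B j) :=
  Nat.Coprime.prod_right fun j hj =>
    hsuit k j (Nat.lt_succ_iff.mp (Finset.mem_range.mp hj)) (by omega)

lemma ap_zero (k : ℕ) (A B : ℕ → ℕ) (hA : ∀ i, i < k → 0 < A i) : 0 ∈ Ap A B k := by
  induction k with
  | zero => simp [Ap]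
  | succ k ih =>
    rw [Ap, Finset.mem_image]
    refine ⟨(0, 0), Finset.mem_product.mpr ⟨ih (fun i hi => hA i (by omega)), ?_⟩, by simp⟩
    exact Finset.mem_range.mpr (hA k (by omega))

lemma ap_le_symm (k : ℕ) (A B : ℕ → ℕ) (hA : ∀ i, i < k → 0 < A i) :
    ∀ w ∈ Ap A B k, w ≤ T k A B ∧ T k A B - w ∈ Ap A B k := by
  induction k with
  | zero =>
    intro w hw
    simp [Ap] at hw
    simp [hw, T, Ap]
  | succ k ih =>
    intro w hw
    rw [Ap, Finset.mem_image] at hw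
    obtain ⟨⟨w₁, v⟩, hp, rfl⟩ := hw
    rw [Finset.mem_product, Finset.mem_range] at hp
    obtain ⟨hw₁, hv⟩ := hp
    obtain ⟨hle, hmem⟩ := ih (fun i hi => hA i (by omega)) w₁ hw₁
    obtain ⟨u, hu⟩ : ∃ u, T k A B = w₁ + u := ⟨_, (Nat.add_sub_cancel' hle).symm⟩
    have ha : 0 < A k := hA k (by omega)
    obtain ⟨x, hx⟩ : ∃ x, A k - 1 = v + x := ⟨A k - 1 - v, by omega⟩
    set G := ∏ j ∈ Finset.range (k + 1), B j with hG
    have hT : T (k + 1) A B = (A k * w₁ + v * G) + (A k * u + x * G) := by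
      rw [T_succ, hu, hx]; ring
    dsimp only
    constructor
    · omega
    · rw [hT, Nat.add_sub_cancel_left]
      rw [Ap, Finset.mem_image]
      refine ⟨(u, x), Finset.mem_product.mpr ⟨?_, Finset.mem_range.mpr (by omega)⟩, rfl⟩
      have : u = T k A B - w₁ := by omega
      rw [this]; exact hmem

lemma ap_unique (k : ℕ) (A B : ℕ → ℕ) (hA : ∀ i, i < k → 0 < A i)
    (hsuit : ∀ i j, j ≤ i → i < k → Nat.Coprime (A i) (B j)) :
    ∀ w ∈ Ap A B k, ∀ w' ∈ Ap A B k, (P k A : ℤ) ∣ (w : ℤ) - (w' : ℤ) → w = w' := by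
  induction k with
  | zero =>
    intro w hw w' hw' _
    simp [Ap] at hw hw'; omega
  | succ k ih =>
    intro w hw w' hw' hdvd
    rw [Ap, Finset.mem_image] at hw hw'
    obtain ⟨⟨w₁, v⟩, hp, rfl⟩ := hw
    obtain ⟨⟨w₁', v'⟩, hp', rfl⟩ := hw'
    rw [Finset.mem_product, Finset.mem_range] at hp hp'
    have ha : 0 < A k := hA k (by omega)
    set G := ∏ j ∈ Finset.range (k + 1), B j with hG
    have hcop : Nat.Coprime (A k) G := cop_prod k A B hsuit
    have hcop' : IsCoprime ((A k : ℤ)) (G : ℤ) := by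
      rw [Nat.isCoprime_iff_coprime]; exact hcop
    -- A k divides the difference
    have hdvd2 : (A k : ℤ) ∣ ((v : ℤ) - v') * G := by
      have h1 : (A k : ℤ) ∣ ((A k * w₁ + v * G : ℕ) : ℤ) - ((A k * w₁' + v' * G : ℕ) : ℤ) := by
        refine dvd_trans ?_ hdvd
        rw [P_succ]; push_cast; exact Dvd.intro _ rfl
      push_cast at h1 ⊢
      obtain ⟨c, hc⟩ := h1
      exact ⟨c - w₁ + w₁', by linarith⟩
    have hdvd3 : (A k : ℤ) ∣ ((v : ℤ) - v') := hcop'.dvd_of_dvd_mul_right hdvd2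
    have hz : ((v : ℤ) - v') = 0 := Int.eq_zero_of_abs_lt_dvd hdvd3 (by
      rw [abs_lt]; constructor <;> push_cast <;> omega)
    have hvv : v = v' := by omega
    subst hvv
    have hdvd4 : (P k A : ℤ) ∣ (w₁ : ℤ) - w₁' := by
      rw [P_succ] at hdvd
      push_cast at hdvd
      obtain ⟨c, hc⟩ := hdvd
      refine ⟨c, ?_⟩
      have hak : (A k : ℤ) ≠ 0 := by exact_mod_cast ha.ne'
      have : (A k : ℤ) * ((w₁ : ℤ) - w₁') = (A k : ℤ) * ((P k A : ℤ) * c) := by push_cast; ring_nf; linarith [hc]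
      have := mul_left_cancel₀ hak this
      linarith [this]
    have := ih (fun i hi => hA i (by omega)) (fun i j hj hi => hsuit i j hj (by omega)) w₁ hp.1 w₁' hp'.1 hdvd4
    rw [this]

lemma ap_exists (k : ℕ) (A B : ℕ → ℕ) (hA : ∀ i, i < k → 0 < A i)
    (hsuit : ∀ i j, j ≤ i → i < k → Nat.Coprime (A i) (B j)) :
    ∀ n : ℤ, ∃ w ∈ Ap A B k, (P k A : ℤ) ∣ n - (w : ℤ) := by
  induction k with
  | zero =>
    intro n
    refine ⟨0, by simp [Ap], by simp [P]⟩
  | succ k ih =>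
    intro n
    have ha : 0 < A k := hA k (by omega)
    set G := ∏ j ∈ Finset.range (k + 1), B j with hG
    have hcop : Nat.Coprime (A k) G := cop_prod k A B hsuit
    have hcop' : IsCoprime ((G : ℤ)) ((A k : ℤ)) := by
      rw [Nat.isCoprime_iff_coprime]; exact hcop.symm
    obtain ⟨x, y, hxy⟩ := hcop'
    have haz : (0 : ℤ) < (A k : ℤ) := by exact_mod_cast ha
    set v0 : ℤ := (x * n) % (A k : ℤ) with hv0
    have h0 : 0 ≤ v0 := Int.emod_nonneg _ haz.ne'
    have hlt : v0 < (A k : ℤ) := Int.emod_lt_of_pos _ haz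
    have hdvd : (A k : ℤ) ∣ n - v0 * G := by
      refine ⟨y * n + (x * n) / (A k : ℤ) * G, ?_⟩
      rw [hv0, Int.emod_def]
      have : n = (x * G + y * (A k : ℤ)) * n := by rw [hxy]; ring
      nth_rewrite 1 [this]
      ring
    obtain ⟨m, hm⟩ := hdvd
    obtain ⟨w₁, hw₁, hdvd₁⟩ := ih (fun i hi => hA i (by omega))
      (fun i j hj hi => hsuit i j hj (by omega)) m
    set v : ℕ := v0.toNat with hv
    have hvc : (v : ℤ) = v0 := Int.toNat_of_nonneg h0
    refine ⟨A k * w₁ + v * G, ?_, ?_⟩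
    · rw [Ap, Finset.mem_image]
      exact ⟨(w₁, v), Finset.mem_product.mpr ⟨hw₁, Finset.mem_range.mpr (by omega)⟩, rfl⟩
    · rw [P_succ]
      obtain ⟨c, hc⟩ := hdvd₁
      refine ⟨c, ?_⟩
      push_cast
      rw [hvc]
      linear_combination hm + (A k : ℤ) * hc

lemma cs00 (A B : ℕ → ℕ) : compoundSeq 0 A B 0 = 1 := by
  simp [compoundSeq]

lemma ap_rep (k : ℕ) (A B : ℕ → ℕ) :
    ∀ w ∈ Ap A B k, ∀ d : ℕ, RepN k A B (d * P k A + w) := by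
  induction k with
  | zero =>
    intro w hw d
    simp [Ap] at hw
    refine ⟨fun _ => d, ?_⟩
    simp [hw, P, cs00]
  | succ k ih =>
    intro w hw d
    rw [Ap, Finset.mem_image] at hw
    obtain ⟨⟨w₁, v⟩, hp, rfl⟩ := hw
    rw [Finset.mem_product, Finset.mem_range] at hp
    obtain ⟨hw₁, hv⟩ := hp
    obtain ⟨e, he⟩ := ih w₁ hw₁ d
    dsimp only
    set G := ∏ j ∈ Finset.range (k + 1), B j with hG
    refine ⟨Function.update e (k + 1) v, ?_⟩
    rw [Finset.sum_range_succ, Function.update_self]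
    have hsum : ∑ i ∈ Finset.range (k + 1), Function.update e (k + 1) v i * compoundSeq (k+1) A B i
        = A k * (d * P k A + w₁) := by
      rw [he, Finset.mul_sum]
      apply Finset.sum_congr rfl
      intro i hi
      rw [Finset.mem_range] at hi
      rw [Function.update_of_ne (by omega), cs_succ k A B (by omega : i ≤ k)]
      ring
    rw [hsum, cs_top, ← hG, P_succ]
    ring

lemma ap_rep_conv (k : ℕ) (A B : ℕ → ℕ) (hA : ∀ i, i < k → 0 < A i) :
    ∀ n : ℕ, RepN k A B n → ∃ w ∈ Ap A B k, ∃ d : ℕ, n = d * P k A + w := by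
  induction k with
  | zero =>
    intro n hn
    obtain ⟨e, he⟩ := hn
    refine ⟨0, by simp [Ap], e 0, ?_⟩
    simp [he, P, cs00]
  | succ k ih =>
    intro n hn
    obtain ⟨e, he⟩ := hn
    have ha : 0 < A k := hA k (by omega)
    set q := e (k + 1) / A k with hq
    set v := e (k + 1) % A k with hv
    have hv' : v < A k := Nat.mod_lt _ ha
    set e' : ℕ → ℕ := Function.update e k (e k + q * B k) with he'
    set m := ∑ i ∈ Finset.range (k + 1), e' i * compoundSeq k A B i with hm
    have key : n = A k * m + v * compoundSeq (k+1) A B (k+1) := by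
      have h1 : A k * m = ∑ i ∈ Finset.range (k + 1), e' i * compoundSeq (k+1) A B i := by
        rw [hm, Finset.mul_sum]
        apply Finset.sum_congr rfl
        intro i hi
        rw [Finset.mem_range] at hi
        rw [cs_succ k A B (by omega : i ≤ k)]
        ring
      have h2 : ∑ i ∈ Finset.range k, e' i * compoundSeq (k+1) A B i
          = ∑ i ∈ Finset.range k, e i * compoundSeq (k+1) A B i := by
        apply Finset.sum_congr rfl
        intro i hi
        rw [Finset.mem_range] at hi
        rw [he', Function.update_of_ne (by omega)]
      have h5 : A k * q + v = e (k + 1) := by rw [hq, hv]; exact Nat.div_add_mod _ _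
      calc n = ∑ i ∈ Finset.range k, e i * compoundSeq (k+1) A B i
              + e k * compoundSeq (k+1) A B k + e (k+1) * compoundSeq (k+1) A B (k+1) := by
              rw [he, Finset.sum_range_succ, Finset.sum_range_succ]
        _ = ∑ i ∈ Finset.range k, e i * compoundSeq (k+1) A B i
              + e k * compoundSeq (k+1) A B k + (A k * q + v) * compoundSeq (k+1) A B (k+1) := by
              rw [h5]
        _ = ∑ i ∈ Finset.range k, e i * compoundSeq (k+1) A B i
              + e k * compoundSeq (k+1) A B k + q * (A k * compoundSeq (k+1) A B (k+1))
              + v * compoundSeq (k+1) A B (k+1) := by ring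
        _ = ∑ i ∈ Finset.range k, e i * compoundSeq (k+1) A B i
              + e k * compoundSeq (k+1) A B k + q * (B k * compoundSeq (k+1) A B k)
              + v * compoundSeq (k+1) A B (k+1) := by rw [cs_rel k A B]
        _ = ∑ i ∈ Finset.range k, e i * compoundSeq (k+1) A B i
              + (e k + q * B k) * compoundSeq (k+1) A B k + v * compoundSeq (k+1) A B (k+1) := by
              ring
        _ = ∑ i ∈ Finset.range (k+1), e' i * compoundSeq (k+1) A B i
              + v * compoundSeq (k+1) A B (k+1) := by
              rw [Finset.sum_range_succ, h2, he', Function.update_self]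
        _ = A k * m + v * compoundSeq (k+1) A B (k+1) := by rw [h1]
    obtain ⟨w₁, hw₁, d, hd⟩ := ih (fun i hi => hA i (by omega)) m ⟨e', hm⟩
    refine ⟨A k * w₁ + v * ∏ j ∈ Finset.range (k+1), B j, ?_, d, ?_⟩
    · rw [Ap, Finset.mem_image]
      exact ⟨(w₁, v), Finset.mem_product.mpr ⟨hw₁, Finset.mem_range.mpr hv'⟩, rfl⟩
    · rw [key, hd, P_succ, cs_top]
      ring

section Char

variable {k : ℕ} {A B : ℕ → ℕ}
variable (hA : ∀ i, i < k → 0 < A i) (hB : ∀ i, i < k → 0 < B i)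
variable (hsuit : ∀ i j, j ≤ i → i < k → Nat.Coprime (A i) (B j))

lemma repZ_natCast (n : ℕ) : RepZ k A B (n : ℤ) ↔
    ∃ c : Fin (k+1) → ℕ, n = ∑ i : Fin (k+1), c i * compoundSeq k A B (i : ℕ) := by
  constructor
  · rintro ⟨c, hc⟩; exact ⟨c, by exact_mod_cast hc⟩
  · rintro ⟨c, hc⟩; exact ⟨c, by exact_mod_cast hc⟩

lemma finrep_iff_repN (n : ℕ) :
    (∃ c : Fin (k+1) → ℕ, n = ∑ i : Fin (k+1), c i * compoundSeq k A B (i : ℕ)) ↔ RepN k A B n := by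
  constructor
  · rintro ⟨c, hc⟩
    refine ⟨fun i => if h : i < k + 1 then c ⟨i, h⟩ else 0, ?_⟩
    rw [hc, ← Fin.sum_univ_eq_sum_range]
    apply Finset.sum_congr rfl
    intro i _
    dsimp only
    rw [dif_pos i.isLt, Fin.eta]
  · rintro ⟨e, he⟩
    exact ⟨fun i => e (i : ℕ), by
      rw [he]
      exact (Fin.sum_univ_eq_sum_range (fun j => e j * compoundSeq k A B j) (k+1)).symm⟩

include hA hsuit

lemma repZ_iff (n : ℤ) :
    RepZ k A B n ↔ ∃ w ∈ Ap A B k, ∃ d : ℤ, 0 ≤ d ∧ n = d * P k A + w := by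
  constructor
  · rintro ⟨c, hc⟩
    have hn : 0 ≤ n := by
      rw [hc]
      positivity
    have hrepN : RepN k A B n.toNat := by
      rw [← finrep_iff_repN]
      refine ⟨c, ?_⟩
      have : ((n.toNat : ℤ)) = ∑ i : Fin (k+1), (c i : ℤ) * (compoundSeq k A B (i : ℕ) : ℤ) := by
        rw [Int.toNat_of_nonneg hn]; exact hc
      exact_mod_cast this
    obtain ⟨w, hw, d, hd⟩ := ap_rep_conv k A B hA n.toNat hrepN
    refine ⟨w, hw, (d : ℤ), by positivity, ?_⟩
    rw [← Int.toNat_of_nonneg hn, hd]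
    push_cast
    ring
  · rintro ⟨w, hw, d, hd0, hd⟩
    have hrepN : RepN k A B (d.toNat * P k A + w) := ap_rep k A B w hw d.toNat
    rw [← finrep_iff_repN] at hrepN
    obtain ⟨c, hc⟩ := hrepN
    refine ⟨c, ?_⟩
    have h2 : n = ((d.toNat * P k A + w : ℕ) : ℤ) := by
      push_cast [Int.toNat_of_nonneg hd0]
      exact hd
    rw [h2, hc]
    push_cast
    rfl

lemma nonrepZ_iff (n : ℤ) :
    ¬ RepZ k A B n ↔ ∃ w ∈ Ap A B k, ∃ d : ℤ, d < 0 ∧ n = d * P k A + w := by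
  have hP : 0 < P k A := P_pos k A B hA
  constructor
  · intro hn
    obtain ⟨w, hw, hdvd⟩ := ap_exists k A B hA hsuit n
    obtain ⟨c, hc⟩ := hdvd
    refine ⟨w, hw, c, ?_, by linarith⟩
    by_contra hc0
    push_neg at hc0
    exact hn ((repZ_iff hA hsuit n).mpr ⟨w, hw, c, hc0, by linarith⟩)
  · rintro ⟨w, hw, d, hd0, hd⟩ hrep
    obtain ⟨w', hw', d', hd0', hd'⟩ := (repZ_iff hA hsuit n).mp hrep
    have hdvd : (P k A : ℤ) ∣ (w : ℤ) - w' := ⟨d' - d, by linarith⟩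
    have := ap_unique k A B hA hsuit w hw w' hw' hdvd
    subst this
    have : d = d' := by
      have hPz : (P k A : ℤ) ≠ 0 := by exact_mod_cast hP.ne'
      have : d * P k A = d' * P k A := by linarith
      exact mul_right_cancel₀ hPz this
    omega

lemma frob_nonrep : ¬ RepZ k A B ((T k A B : ℤ) - P k A) := by
  rw [nonrepZ_iff hA hsuit]
  have hT : T k A B ∈ Ap A B k := by
    have := (ap_le_symm k A B hA 0 (ap_zero k A B hA)).2
    simpa using this
  exact ⟨T k A B, hT, -1, by omega, by ring⟩

lemma frob_rep (m : ℤ) (hm : (T k A B : ℤ) - P k A < m) : RepZ k A B m := by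
  obtain ⟨w, hw, hdvd⟩ := ap_exists k A B hA hsuit m
  obtain ⟨d, hd⟩ := hdvd
  have hwT : w ≤ T k A B := (ap_le_symm k A B hA w hw).1
  have hP : 0 < P k A := P_pos k A B hA
  refine (repZ_iff hA hsuit m).mpr ⟨w, hw, d, ?_, by linarith⟩
  nlinarith [hd, hm, (show (w:ℤ) ≤ T k A B by exact_mod_cast hwT), (show (0:ℤ) < P k A by exact_mod_cast hP)]

lemma symZ (n : ℤ) : RepZ k A B n ↔ ¬ RepZ k A B ((T k A B : ℤ) - P k A - n) := by
  constructor
  · intro h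
    obtain ⟨w, hw, d, hd0, hd⟩ := (repZ_iff hA hsuit n).mp h
    obtain ⟨hwT, hsym⟩ := ap_le_symm k A B hA w hw
    rw [nonrepZ_iff hA hsuit]
    refine ⟨T k A B - w, hsym, -1 - d, by omega, ?_⟩
    push_cast [Nat.cast_sub hwT]
    linarith
  · intro h
    by_contra hn
    obtain ⟨w, hw, d, hd0, hd⟩ := (nonrepZ_iff hA hsuit n).mp hn
    obtain ⟨hwT, hsym⟩ := ap_le_symm k A B hA w hw
    apply h
    refine (repZ_iff hA hsuit _).mpr ⟨T k A B - w, hsym, -1 - d, by omega, ?_⟩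
    push_cast [Nat.cast_sub hwT]
    linarith

end Char

lemma gauss1 (n : ℕ) : ∑ i ∈ Finset.range n, (i : ℚ) = n * (n - 1) / 2 := by
  induction n with
  | zero => simp
  | succ n ih =>
    rw [Finset.sum_range_succ, ih]
    push_cast
    ring

lemma gauss2 (n : ℕ) : ∑ i ∈ Finset.range n, (i : ℚ) ^ 2 = n * (n - 1) * (2 * n - 1) / 6 := by
  induction n with
  | zero => simp
  | succ n ih =>
    rw [Finset.sum_range_succ, ih]
    push_cast
    ring

/-- Rational versions of `T` and its square analogue. -/
def Tq (k : ℕ) (A B : ℕ → ℕ) : ℚ :=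
  ∑ i ∈ Finset.range k, ((A i : ℚ) - 1) * (compoundSeq k A B (i + 1) : ℚ)

def T2q (k : ℕ) (A B : ℕ → ℕ) : ℚ :=
  ∑ i ∈ Finset.range k, ((A i : ℚ) ^ 2 - 1) * (compoundSeq k A B (i + 1) : ℚ) ^ 2

lemma T_cast (k : ℕ) (A B : ℕ → ℕ) (hA : ∀ i, i < k → 0 < A i) :
    (T k A B : ℚ) = Tq k A B := by
  rw [T, Tq]
  push_cast
  apply Finset.sum_congr rfl
  intro i hi
  rw [Finset.mem_range] at hi
  rw [Nat.cast_sub (hA i hi)]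
  norm_num

lemma Tq_succ (k : ℕ) (A B : ℕ → ℕ) :
    Tq (k + 1) A B = A k * Tq k A B + ((A k : ℚ) - 1) * (∏ j ∈ Finset.range (k + 1), B j : ℕ) := by
  rw [Tq, Tq, Finset.sum_range_succ, Finset.mul_sum]
  congr 1
  · apply Finset.sum_congr rfl
    intro i hi
    rw [Finset.mem_range] at hi
    rw [cs_succ k A B (by omega : i + 1 ≤ k)]
    push_cast
    ring
  · rw [cs_top]

lemma T2q_succ (k : ℕ) (A B : ℕ → ℕ) :
    T2q (k + 1) A B = (A k : ℚ) ^ 2 * T2q k A B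
      + ((A k : ℚ) ^ 2 - 1) * ((∏ j ∈ Finset.range (k + 1), B j : ℕ) : ℚ) ^ 2 := by
  rw [T2q, T2q, Finset.sum_range_succ, Finset.mul_sum]
  congr 1
  · apply Finset.sum_congr rfl
    intro i hi
    rw [Finset.mem_range] at hi
    rw [cs_succ k A B (by omega : i + 1 ≤ k)]
    push_cast
    ring
  · rw [cs_top]

section Moments

variable {k : ℕ} {A B : ℕ → ℕ}
variable (hA : ∀ i, i < k → 0 < A i)
variable (hsuit : ∀ i j, j ≤ i → i < k → Nat.Coprime (A i) (B j))

include hA hsuit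

lemma ap_mod_injOn : ∀ w ∈ Ap A B k, ∀ w' ∈ Ap A B k,
    w % P k A = w' % P k A → w = w' := by
  intro w hw w' hw' h
  refine ap_unique k A B hA hsuit w hw w' hw' ?_
  have h1 : (P k A : ℤ) ∣ (w' : ℤ) - w := Nat.modEq_iff_dvd.mp h
  exact dvd_sub_comm.mp h1

lemma ap_mod_image : (Ap A B k).image (· % P k A) = Finset.range (P k A) := by
  have hP : 0 < P k A := P_pos k A B hA
  apply Finset.Subset.antisymm
  · intro j hj
    rw [Finset.mem_image] at hj
    obtain ⟨w, _, rfl⟩ := hj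
    exact Finset.mem_range.mpr (Nat.mod_lt _ hP)
  · intro j hj
    rw [Finset.mem_range] at hj
    obtain ⟨w, hw, hdvd⟩ := ap_exists k A B hA hsuit (j : ℤ)
    rw [Finset.mem_image]
    refine ⟨w, hw, ?_⟩
    have hmod : w % P k A = j % P k A := by
      have := (Nat.modEq_iff_dvd (n := P k A) (a := w) (b := j)).mpr ?_
      · exact this
      · exact_mod_cast hdvd
    rw [hmod, Nat.mod_eq_of_lt hj]

lemma ap_card : (Ap A B k).card = P k A := by
  rw [← Finset.card_range (P k A), ← ap_mod_image hA hsuit]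
  exact (Finset.card_image_of_injOn (fun w hw w' hw' h => ap_mod_injOn hA hsuit w hw w' hw' h)).symm

lemma ap_mod_sum (f : ℕ → ℚ) :
    ∑ w ∈ Ap A B k, f (w % P k A) = ∑ j ∈ Finset.range (P k A), f j := by
  rw [← ap_mod_image hA hsuit, Finset.sum_image
    (fun w hw w' hw' h => ap_mod_injOn hA hsuit w hw w' hw' h)]

end Moments

lemma ap_image_inj (k : ℕ) (A B : ℕ → ℕ) (ha : 0 < A k)
    (hcop : Nat.Coprime (A k) (∏ j ∈ Finset.range (k + 1), B j)) :
    ∀ p ∈ (Ap A B k) ×ˢ Finset.range (A k), ∀ q ∈ (Ap A B k) ×ˢ Finset.range (A k),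
      (fun p : ℕ × ℕ => A k * p.1 + p.2 * ∏ j ∈ Finset.range (k + 1), B j) p =
      (fun p : ℕ × ℕ => A k * p.1 + p.2 * ∏ j ∈ Finset.range (k + 1), B j) q → p = q := by
  rintro ⟨w₁, v⟩ hp ⟨w₂, v'⟩ hq h
  rw [Finset.mem_product, Finset.mem_range] at hp hq
  dsimp only at h hp hq
  obtain ⟨hv, hw⟩ := inj_aux (A k) _ hcop ha hp.2 hq.2 h
  simp [hv, hw]

lemma sum_affine (a : ℕ) (x y : ℚ) :
    ∑ v ∈ Finset.range a, (x + (v : ℚ) * y) = a * x + y * (a * ((a : ℚ) - 1)) / 2 := by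
  induction a with
  | zero => simp
  | succ a ih =>
    rw [Finset.sum_range_succ, ih]
    push_cast
    ring

lemma sum_affine_sq (a : ℕ) (x y : ℚ) :
    ∑ v ∈ Finset.range a, (x + (v : ℚ) * y) ^ 2
      = a * x ^ 2 + x * y * (a * ((a : ℚ) - 1)) + y ^ 2 * (a * ((a : ℚ) - 1) * (2 * a - 1)) / 6 := by
  induction a with
  | zero => simp
  | succ a ih =>
    rw [Finset.sum_range_succ, ih]
    push_cast
    ring

lemma apM1 (k : ℕ) (A B : ℕ → ℕ) (hA : ∀ i, i < k → 0 < A i)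
    (hsuit : ∀ i j, j ≤ i → i < k → Nat.Coprime (A i) (B j)) :
    ∑ w ∈ Ap A B k, (w : ℚ) = (P k A : ℚ) * Tq k A B / 2 := by
  induction k with
  | zero => simp [Ap, P, Tq]
  | succ k ih =>
    have hA' : ∀ i, i < k → 0 < A i := fun i hi => hA i (by omega)
    have hsuit' : ∀ i j, j ≤ i → i < k → Nat.Coprime (A i) (B j) :=
      fun i j hj hi => hsuit i j hj (by omega)
    have ha : 0 < A k := hA k (by omega)
    have hcop : Nat.Coprime (A k) (∏ j ∈ Finset.range (k + 1), B j) := cop_prod k A B hsuit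
    rw [Ap, Finset.sum_image (ap_image_inj k A B ha hcop), Finset.sum_product]
    have hinner : ∀ w₁ ∈ Ap A B k,
        (∑ v ∈ Finset.range (A k), ((A k * w₁ + v * ∏ j ∈ Finset.range (k + 1), B j : ℕ) : ℚ))
        = (A k : ℚ) ^ 2 * (w₁ : ℚ)
          + ((∏ j ∈ Finset.range (k + 1), B j : ℕ) : ℚ)
            * ((A k : ℚ) * ((A k : ℚ) - 1)) / 2 := by
      intro w₁ _
      have hc : ∀ v ∈ Finset.range (A k),
          ((A k * w₁ + v * ∏ j ∈ Finset.range (k + 1), B j : ℕ) : ℚ)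
          = ((A k : ℚ) * (w₁ : ℚ)
            + (v : ℚ) * ((∏ j ∈ Finset.range (k + 1), B j : ℕ) : ℚ)) := by
        intro v _
        push_cast
        ring
      rw [Finset.sum_congr rfl hc, sum_affine]
      ring
    rw [Finset.sum_congr rfl hinner, Finset.sum_add_distrib, ← Finset.mul_sum, ih hA' hsuit',
      Finset.sum_const, ap_card hA' hsuit', nsmul_eq_mul, P_succ, Tq_succ]
    push_cast
    ring

lemma apM2 (k : ℕ) (A B : ℕ → ℕ) (hA : ∀ i, i < k → 0 < A i)
    (hsuit : ∀ i j, j ≤ i → i < k → Nat.Coprime (A i) (B j)) :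
    ∑ w ∈ Ap A B k, (w : ℚ) ^ 2 = (P k A : ℚ) * (3 * (Tq k A B) ^ 2 + T2q k A B) / 12 := by
  induction k with
  | zero => simp [Ap, P, Tq, T2q]
  | succ k ih =>
    have hA' : ∀ i, i < k → 0 < A i := fun i hi => hA i (by omega)
    have hsuit' : ∀ i j, j ≤ i → i < k → Nat.Coprime (A i) (B j) :=
      fun i j hj hi => hsuit i j hj (by omega)
    have ha : 0 < A k := hA k (by omega)
    have hcop : Nat.Coprime (A k) (∏ j ∈ Finset.range (k + 1), B j) := cop_prod k A B hsuit
    rw [Ap, Finset.sum_image (ap_image_inj k A B ha hcop), Finset.sum_product]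
    have hinner : ∀ w₁ ∈ Ap A B k,
        (∑ v ∈ Finset.range (A k), ((A k * w₁ + v * ∏ j ∈ Finset.range (k + 1), B j : ℕ) : ℚ) ^ 2)
        = (A k : ℚ) ^ 3 * (w₁ : ℚ) ^ 2
          + ((A k : ℚ) ^ 2 * ((A k : ℚ) - 1) * ((∏ j ∈ Finset.range (k + 1), B j : ℕ) : ℚ))
            * (w₁ : ℚ)
          + ((∏ j ∈ Finset.range (k + 1), B j : ℕ) : ℚ) ^ 2
            * ((A k : ℚ) * ((A k : ℚ) - 1) * (2 * (A k : ℚ) - 1)) / 6 := by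
      intro w₁ _
      have hc : ∀ v ∈ Finset.range (A k),
          ((A k * w₁ + v * ∏ j ∈ Finset.range (k + 1), B j : ℕ) : ℚ) ^ 2
          = ((A k : ℚ) * (w₁ : ℚ)
            + (v : ℚ) * ((∏ j ∈ Finset.range (k + 1), B j : ℕ) : ℚ)) ^ 2 := by
        intro v _
        push_cast
        ring
      rw [Finset.sum_congr rfl hc, sum_affine_sq]
      ring
    rw [Finset.sum_congr rfl hinner, Finset.sum_add_distrib, Finset.sum_add_distrib,
      ← Finset.mul_sum, ← Finset.mul_sum, ih hA' hsuit', apM1 k A B hA' hsuit',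
      Finset.sum_const, ap_card hA' hsuit', nsmul_eq_mul, P_succ, Tq_succ, T2q_succ]
    push_cast
    ring

lemma TP (k : ℕ) (A B : ℕ → ℕ) (hA : ∀ i, i < k → 0 < A i) (hB : ∀ i, i < k → 0 < B i) :
    P k A ≤ T k A B + 1 := by
  induction k with
  | zero => simp [P, T]
  | succ k ih =>
    have hA' : ∀ i, i < k → 0 < A i := fun i hi => hA i (by omega)
    have hB' : ∀ i, i < k → 0 < B i := fun i hi => hB i (by omega)
    have h1 := ih hA' hB'
    have ha : 0 < A k := hA k (by omega)
    have hG : 0 < ∏ j ∈ Finset.range (k + 1), B j :=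
      Finset.prod_pos fun j hj => hB j (Finset.mem_range.mp hj)
    rw [P_succ, T_succ]
    have h2 : A k * P k A ≤ A k * (T k A B + 1) := Nat.mul_le_mul_left _ h1
    have h3 : A k - 1 ≤ (A k - 1) * ∏ j ∈ Finset.range (k + 1), B j :=
      Nat.le_mul_of_pos_right _ hG
    have h4 : A k * (T k A B + 1) = A k * T k A B + A k := by ring
    omega

section NRSec

variable {k : ℕ} {A B : ℕ → ℕ}
variable (hA : ∀ i, i < k → 0 < A i) (hB : ∀ i, i < k → 0 < B i)
variable (hsuit : ∀ i j, j ≤ i → i < k → Nat.Coprime (A i) (B j))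
variable {NR : Finset ℕ} (hNR' : ∀ n : ℕ, n ∈ NR ↔ ¬ RepZ k A B (n : ℤ))

include hA hsuit hNR'

lemma NR_lt : ∀ n ∈ NR, n < T k A B + 1 - P k A := by
  intro n hn
  have h := (hNR' n).mp hn
  obtain ⟨w, hw, d, hd0, hd⟩ := (nonrepZ_iff hA hsuit (n : ℤ)).mp h
  have hwT : w ≤ T k A B := (ap_le_symm k A B hA w hw).1
  have hP : 0 < P k A := P_pos k A B hA
  have h1 : (n : ℤ) ≤ (w : ℤ) - P k A := by
    have : d ≤ -1 := by omega
    have hPz : (0:ℤ) < (P k A : ℤ) := by exact_mod_cast hP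
    nlinarith
  have h2 : (w : ℤ) ≤ (T k A B : ℤ) := by exact_mod_cast hwT
  omega

lemma NR_eq : NR = ((Ap A B k).sigma fun w => Finset.range (w / P k A)).image
    (fun p => p.1 - (p.2 + 1) * P k A) := by
  have hP : 0 < P k A := P_pos k A B hA
  ext n
  rw [Finset.mem_image, hNR' n]
  constructor
  · intro h
    obtain ⟨w, hw, d, hd0, hd⟩ := (nonrepZ_iff hA hsuit (n : ℤ)).mp h
    set t : ℕ := (-d - 1).toNat with ht
    have htc : (t : ℤ) = -d - 1 := Int.toNat_of_nonneg (by omega)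
    have hle : (t + 1) * P k A ≤ w := by
      have h2 : ((t:ℤ) + 1) * P k A ≤ w := by
        have hn0 : (0:ℤ) ≤ n := Int.natCast_nonneg n
        nlinarith [htc, hd]
      exact_mod_cast h2
    refine ⟨⟨w, t⟩, Finset.mem_sigma.mpr ⟨hw, Finset.mem_range.mpr ?_⟩, ?_⟩
    · show t < w / P k A
      have := (Nat.le_div_iff_mul_le hP).mpr hle
      omega
    · show w - (t + 1) * P k A = n
      have h3 : (n : ℤ) = (w : ℤ) - ((t:ℤ) + 1) * P k A := by rw [hd, htc]; ring
      have hn : (n : ℤ) + ((t:ℤ) + 1) * P k A = w := by linarith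
      have h4 : n + (t + 1) * P k A = w := by exact_mod_cast hn
      omega
  · rintro ⟨⟨w, t⟩, hp, rfl⟩
    rw [Finset.mem_sigma, Finset.mem_range] at hp
    dsimp only at hp ⊢
    obtain ⟨hw, htq⟩ := hp
    have hle : (t + 1) * P k A ≤ w := by
      calc (t + 1) * P k A ≤ (w / P k A) * P k A := by
            apply Nat.mul_le_mul_right
            omega
        _ ≤ w := Nat.div_mul_le_self _ _
    rw [nonrepZ_iff hA hsuit]
    refine ⟨w, hw, -((t : ℤ) + 1), by omega, ?_⟩
    push_cast [Nat.cast_sub hle]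
    ring

lemma NR_lediv : ∀ t w : ℕ, t < w / P k A → (t + 1) * P k A ≤ w := by
  intro t w htq
  calc (t + 1) * P k A ≤ (w / P k A) * P k A := by
        apply Nat.mul_le_mul_right
        omega
    _ ≤ w := Nat.div_mul_le_self _ _

lemma NR_sum (f : ℕ → ℚ) :
    ∑ n ∈ NR, f n = ∑ w ∈ Ap A B k, ∑ t ∈ Finset.range (w / P k A), f (w - (t + 1) * P k A) := by
  have hP : 0 < P k A := P_pos k A B hA
  rw [NR_eq hA hsuit hNR']
  rw [Finset.sum_image, Finset.sum_sigma]
  intro p hp q hq h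
  rw [Finset.mem_coe, Finset.mem_sigma, Finset.mem_range] at hp hq
  have hlep : (p.2 + 1) * P k A ≤ p.1 := NR_lediv hA hsuit hNR' p.2 p.1 hp.2
  have hleq : (q.2 + 1) * P k A ≤ q.1 := NR_lediv hA hsuit hNR' q.2 q.1 hq.2
  have e1 : (p.1 : ℤ) - ((p.2 : ℤ) + 1) * P k A = (q.1 : ℤ) - ((q.2 : ℤ) + 1) * P k A := by
    have e0 : ((p.1 - (p.2 + 1) * P k A : ℕ) : ℤ) = ((q.1 - (q.2 + 1) * P k A : ℕ) : ℤ) :=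
      congrArg (Nat.cast : ℕ → ℤ) h
    push_cast [Nat.cast_sub hlep, Nat.cast_sub hleq] at e0
    linarith
  have hdvd : (P k A : ℤ) ∣ (p.1 : ℤ) - q.1 := ⟨(p.2 : ℤ) - q.2, by linarith⟩
  have h1 := ap_unique k A B hA hsuit p.1 hp.1 q.1 hq.1 hdvd
  have h2 : p.2 = q.2 := by
    rw [h1] at e1
    have hPz : (P k A : ℤ) ≠ 0 := by
      have : (0:ℤ) < (P k A : ℤ) := by exact_mod_cast hP
      omega
    have h3 : ((p.2 : ℤ) + 1) * P k A = ((q.2 : ℤ) + 1) * P k A := by linarith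
    have h4 := mul_right_cancel₀ hPz h3
    exact_mod_cast (by linarith [h4] : (p.2 : ℤ) = q.2)
  exact Sigma.ext h1 (by rw [h2])

lemma sym_pair (n : ℕ) (hn : n < T k A B + 1 - P k A) :
    n ∈ NR ↔ (T k A B - P k A - n) ∉ NR := by
  have h1 : P k A ≤ T k A B := by omega
  have h2 : n ≤ T k A B - P k A := by omega
  have hc : ((T k A B - P k A - n : ℕ) : ℤ) = (T k A B : ℤ) - P k A - n := by
    push_cast [Nat.cast_sub h2, Nat.cast_sub h1]
    ring
  have hs := symZ hA hsuit ((T k A B : ℤ) - P k A - n)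
  rw [show (T k A B : ℤ) - P k A - ((T k A B : ℤ) - P k A - n) = n by ring] at hs
  rw [hNR' n, hNR' _, hc, not_not]
  tauto

lemma NR_image_disj : Disjoint NR (NR.image (fun n => T k A B - P k A - n)) := by
  rw [Finset.disjoint_left]
  intro a ha hb
  rw [Finset.mem_image] at hb
  obtain ⟨n, hn, rfl⟩ := hb
  exact (sym_pair hA hsuit hNR' n (NR_lt hA hsuit hNR' n hn)).mp hn ha

lemma NR_image_injOn : ∀ n ∈ NR, ∀ n' ∈ NR,
    T k A B - P k A - n = T k A B - P k A - n' → n = n' := by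
  intro n hn n' hn' h
  have h1 := NR_lt hA hsuit hNR' n hn
  have h2 := NR_lt hA hsuit hNR' n' hn'
  omega

lemma range_decomp : Finset.range (T k A B + 1 - P k A)
    = NR ∪ NR.image (fun n => T k A B - P k A - n) := by
  ext m
  rw [Finset.mem_union, Finset.mem_range]
  constructor
  · intro hm
    by_cases h : m ∈ NR
    · exact Or.inl h
    · refine Or.inr (Finset.mem_image.mpr ⟨T k A B - P k A - m, ?_, by omega⟩)
      have := (sym_pair hA hsuit hNR' m hm).not.mp h
      rw [not_not] at this
      exact this
  · intro hm
    rcases hm with h | h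
    · exact NR_lt hA hsuit hNR' m h
    · rw [Finset.mem_image] at h
      obtain ⟨n, hn, rfl⟩ := h
      have := NR_lt hA hsuit hNR' n hn
      omega

lemma NR_card2 : 2 * NR.card = T k A B + 1 - P k A := by
  have h := congrArg Finset.card (range_decomp hA hsuit hNR')
  rw [Finset.card_range, Finset.card_union_of_disjoint (NR_image_disj hA hsuit hNR'),
    Finset.card_image_of_injOn (fun n hn n' hn' h => NR_image_injOn hA hsuit hNR' n hn n' hn' h)]
    at h
  omega

lemma NR_symsum (f : ℕ → ℚ) : ∑ m ∈ Finset.range (T k A B + 1 - P k A), f m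
    = ∑ n ∈ NR, f n + ∑ n ∈ NR, f (T k A B - P k A - n) := by
  rw [range_decomp hA hsuit hNR',
    Finset.sum_union (NR_image_disj hA hsuit hNR'),
    Finset.sum_image (fun n hn n' hn' h => NR_image_injOn hA hsuit hNR' n hn n' hn' h)]

lemma NR_S1 : 24 * ∑ n ∈ NR, (n : ℚ)
    = 3 * Tq k A B ^ 2 + T2q k A B - 2 * ((P k A : ℚ) - 1) * (2 * (P k A : ℚ) - 1)
      - 6 * (P k A : ℚ) * Tq k A B + 6 * (P k A : ℚ) * ((P k A : ℚ) - 1) := by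
  have hP : 0 < P k A := P_pos k A B hA
  have hPq : (0 : ℚ) < (P k A : ℚ) := by exact_mod_cast hP
  have hper : ∀ w ∈ Ap A B k,
      2 * (P k A : ℚ) * (∑ t ∈ Finset.range (w / P k A), ((w - (t + 1) * P k A : ℕ) : ℚ))
      = (w : ℚ) ^ 2 - ((w % P k A : ℕ) : ℚ) ^ 2
        - (P k A : ℚ) * ((w : ℚ) - ((w % P k A : ℕ) : ℚ)) := by
    intro w _
    have hc : ∀ t ∈ Finset.range (w / P k A),
        ((w - (t + 1) * P k A : ℕ) : ℚ) = ((w : ℚ) - (P k A : ℚ)) + (t : ℚ) * (-(P k A : ℚ)) := by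
      intro t ht
      rw [Finset.mem_range] at ht
      have hle := NR_lediv hA hsuit hNR' t w ht
      push_cast [Nat.cast_sub hle]
      ring
    rw [Finset.sum_congr rfl hc, sum_affine]
    have hqm : (P k A : ℚ) * ((w / P k A : ℕ) : ℚ) + ((w % P k A : ℕ) : ℚ) = (w : ℚ) := by
      exact_mod_cast Nat.div_add_mod w (P k A)
    linear_combination ((w : ℚ) + ((w % P k A : ℕ) : ℚ)
      - (P k A : ℚ) * ((w / P k A : ℕ) : ℚ) - (P k A : ℚ)) * hqm
  have key : 2 * (P k A : ℚ) * ∑ n ∈ NR, (n : ℚ)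
      = ∑ w ∈ Ap A B k, ((w : ℚ) ^ 2 - ((w % P k A : ℕ) : ℚ) ^ 2
        - (P k A : ℚ) * ((w : ℚ) - ((w % P k A : ℕ) : ℚ))) := by
    rw [NR_sum hA hsuit hNR' (fun n => (n : ℚ)), Finset.mul_sum]
    exact Finset.sum_congr rfl hper
  rw [Finset.sum_sub_distrib, Finset.sum_sub_distrib, ← Finset.mul_sum,
    Finset.sum_sub_distrib, apM2 k A B hA hsuit, apM1 k A B hA hsuit,
    ap_mod_sum hA hsuit (fun j => (j : ℚ) ^ 2), ap_mod_sum hA hsuit (fun j => (j : ℚ)),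
    gauss1, gauss2] at key
  have hPne : (P k A : ℚ) ≠ 0 := hPq.ne'
  apply mul_left_cancel₀ hPne
  linear_combination 12 * key

end NRSec

lemma cs_sq (k : ℕ) (A B : ℕ → ℕ) (i : ℕ) :
    compoundSeq k (fun t => A t ^ 2) (fun t => B t ^ 2) i = compoundSeq k A B i ^ 2 := by
  unfold compoundSeq
  rw [Finset.prod_pow, Finset.prod_pow, mul_pow]

lemma P_sq (k : ℕ) (A : ℕ → ℕ) : P k (fun t => A t ^ 2) = (P k A) ^ 2 := by
  rw [P, P, Finset.prod_pow]

lemma Tq_sq (k : ℕ) (A B : ℕ → ℕ) :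
    Tq k (fun t => A t ^ 2) (fun t => B t ^ 2) = T2q k A B := by
  rw [Tq, T2q]
  apply Finset.sum_congr rfl
  intro i _
  rw [cs_sq]
  push_cast
  ring

end CS


open CS in
/-- `S₂(A,B) = (S₀−1)S₀(2S₀−1)/6 + (S₀(A²,B²)/12)(2S₀−1)`, and equivalently
`S₂(A,B) = F·S₁(A,B) − 2·Σ_{n=0}^{S₀−1} n²` where `F` is the Frobenius number. -/
theorem sylvester_sum_two (k : ℕ) (A B : ℕ → ℕ)
    (hA : ∀ i, i < k → 0 < A i) (hB : ∀ i, i < k → 0 < B i)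
    (hsuit : ∀ i j, j ≤ i → i < k → Nat.Coprime (A i) (B j))
    (NR NR2 : Finset ℕ)
    (hNR : ∀ n : ℕ, n ∈ NR ↔
      ¬ ∃ c : Fin (k + 1) → ℕ, n = ∑ i : Fin (k + 1), c i * compoundSeq k A B (i : ℕ))
    (hNR2 : ∀ n : ℕ, n ∈ NR2 ↔
      ¬ ∃ c : Fin (k + 1) → ℕ,
        n = ∑ i : Fin (k + 1), c i * compoundSeq k (fun t => (A t) ^ 2) (fun t => (B t) ^ 2) (i : ℕ))
    (F : ℤ) (hF1 : ¬ RepZ k A B F) (hF2 : ∀ m : ℤ, F < m → RepZ k A B m) :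
    (∑ n ∈ NR, (n : ℚ) ^ 2) =
        ((NR.card : ℚ) - 1) * (NR.card : ℚ) * (2 * (NR.card : ℚ) - 1) / 6 +
          (NR2.card : ℚ) / 12 * (2 * (NR.card : ℚ) - 1) ∧
      (∑ n ∈ NR, (n : ℚ) ^ 2) =
        (F : ℚ) * (∑ n ∈ NR, (n : ℚ)) - 2 * ∑ n ∈ Finset.range NR.card, (n : ℚ) ^ 2 := by
  have hA2 : ∀ i, i < k → 0 < (fun t => A t ^ 2) i := fun i hi => pow_pos (hA i hi) 2
  have hB2 : ∀ i, i < k → 0 < (fun t => B t ^ 2) i := fun i hi => pow_pos (hB i hi) 2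
  have hsuit2 : ∀ i j, j ≤ i → i < k →
      Nat.Coprime ((fun t => A t ^ 2) i) ((fun t => B t ^ 2) j) :=
    fun i j hj hi => (hsuit i j hj hi).pow 2 2
  have hNR' : ∀ n : ℕ, n ∈ NR ↔ ¬ RepZ k A B (n : ℤ) := fun n => by
    rw [hNR n]
    exact not_congr (repZ_natCast n).symm
  have hNR2' : ∀ n : ℕ, n ∈ NR2 ↔ ¬ RepZ k (fun t => A t ^ 2) (fun t => B t ^ 2) (n : ℤ) :=
    fun n => by
      rw [hNR2 n]
      exact not_congr (repZ_natCast n).symm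
  have hTP := TP k A B hA hB
  have hTP2 := TP k (fun t => A t ^ 2) (fun t => B t ^ 2) hA2 hB2
  have hg : 2 * NR.card = T k A B + 1 - P k A := NR_card2 hA hsuit hNR'
  have hg2 : 2 * NR2.card = T k (fun t => A t ^ 2) (fun t => B t ^ 2) + 1
      - P k (fun t => A t ^ 2) := NR_card2 hA2 hsuit2 hNR2'
  -- rational relations
  have r1 : 2 * (NR.card : ℚ) = Tq k A B + 1 - (P k A : ℚ) := by
    have h := congrArg (Nat.cast : ℕ → ℚ) hg
    push_cast [Nat.cast_sub hTP] at h
    rw [T_cast k A B hA] at h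
    linarith
  have r2 : 2 * (NR2.card : ℚ) = T2q k A B + 1 - (P k A : ℚ) ^ 2 := by
    have h := congrArg (Nat.cast : ℕ → ℚ) hg2
    push_cast [Nat.cast_sub hTP2] at h
    rw [T_cast k (fun t => A t ^ 2) (fun t => B t ^ 2) hA2, Tq_sq, P_sq] at h
    push_cast at h
    linarith
  have hF : F = (T k A B : ℤ) - P k A := by
    rcases lt_trichotomy F ((T k A B : ℤ) - P k A) with h | h | h
    · exact absurd (hF2 _ h) (frob_nonrep hA hsuit)
    · exact h
    · exact absurd (frob_rep hA hsuit F h) hF1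
  have r3 : (F : ℚ) = Tq k A B - (P k A : ℚ) := by
    have : ((F : ℤ) : ℚ) = ((T k A B : ℤ) : ℚ) - ((P k A : ℤ) : ℚ) := by
      rw [hF]; push_cast; ring
    push_cast at this
    rw [T_cast k A B hA] at this
    exact this
  have r4 := NR_S1 hA hsuit hNR'
  -- symmetry second-moment relation
  have hsym := NR_symsum hA hsuit hNR' (fun m => (m : ℚ) ^ 2)
  have hMq : ((T k A B + 1 - P k A : ℕ) : ℚ) = 2 * (NR.card : ℚ) := by
    exact_mod_cast (congrArg (Nat.cast : ℕ → ℚ) hg).symm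
  rw [gauss2, hMq] at hsym
  have hsub : ∀ n ∈ NR, ((T k A B - P k A - n : ℕ) : ℚ) ^ 2
      = (2 * (NR.card : ℚ) - 1 - (n : ℚ)) ^ 2 := by
    intro n hn
    have hlt := NR_lt hA hsuit hNR' n hn
    have h1 : P k A ≤ T k A B := by omega
    have h2 : n ≤ T k A B - P k A := by omega
    have hc : ((T k A B - P k A - n : ℕ) : ℚ) = (T k A B : ℚ) - (P k A : ℚ) - n := by
      push_cast [Nat.cast_sub h2, Nat.cast_sub h1]
      ring
    rw [hc, T_cast k A B hA]
    have : (Tq k A B) - (P k A : ℚ) = 2 * (NR.card : ℚ) - 1 := by linarith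
    rw [this]
  rw [Finset.sum_congr rfl hsub] at hsym
  have hexp : ∑ n ∈ NR, (2 * (NR.card : ℚ) - 1 - (n : ℚ)) ^ 2
      = (NR.card : ℚ) * (2 * (NR.card : ℚ) - 1) ^ 2
        - 2 * (2 * (NR.card : ℚ) - 1) * ∑ n ∈ NR, (n : ℚ) + ∑ n ∈ NR, (n : ℚ) ^ 2 := by
    have h1 : ∀ n ∈ NR, (2 * (NR.card : ℚ) - 1 - (n : ℚ)) ^ 2
        = ((2 * (NR.card : ℚ) - 1) ^ 2 - 2 * (2 * (NR.card : ℚ) - 1) * (n : ℚ)) + (n : ℚ) ^ 2 :=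
      fun n _ => by ring
    rw [Finset.sum_congr rfl h1, Finset.sum_add_distrib, Finset.sum_sub_distrib,
      Finset.sum_const, ← Finset.mul_sum, nsmul_eq_mul]
  rw [hexp] at hsym
  have e1 : (F : ℚ) = 2 * (NR.card : ℚ) - 1 := by linear_combination r3 - r1
  have hG2 : (∑ n ∈ NR, (n : ℚ) ^ 2) =
      (F : ℚ) * (∑ n ∈ NR, (n : ℚ)) - 2 * ∑ n ∈ Finset.range NR.card, (n : ℚ) ^ 2 := by
    rw [gauss2]
    linear_combination (-1/2 : ℚ) * hsym + (-(∑ n ∈ NR, (n : ℚ))) * e1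
  have hS1' : 24 * (∑ n ∈ NR, (n : ℚ)) = 12 * (NR.card : ℚ) * ((NR.card : ℚ) - 1)
      + 2 * (NR2.card : ℚ) := by
    linear_combination r4 + (-6 * (NR.card : ℚ) - 3 * Tq k A B + 3 * (P k A : ℚ) + 3) * r1 - r2
  refine ⟨?_, hG2⟩
  linear_combination hG2 + ((2 * (NR.card : ℚ) - 1) / 24) * hS1'
    + (∑ n ∈ NR, (n : ℚ)) * e1 + (-2 : ℚ) * gauss2 NR.card
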